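/- arXiv:1403.8144 — 2 statements merged into one kernel-verified Lean document; each statement's English description precedes it below -/
import Mathlib

section
/- Let X, Y be independent standard normal random variables (correlation ρ = 0). Then for any w > 0, the collision probability P(⌊X/w⌋ = ⌊Y/w⌋) = 2 ∑_{i=0}^∞ (Φ((i+1)w) - Φ(iw))² , and this quantity is strictly less than 1/2 + (Φ(w) - 1/2)², and converges to 1/2 as w → ∞. -/
open MeasureTheory ProbabilityTheory Real Set

/-- Standard normal density. -/
noncomputable def stdPdf (x : ℝ) : ℝ := (Real.sqrt (2 * Real.pi))⁻¹ * Real.exp (-x ^ 2 / 2)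

/-- Standard normal CDF. -/
noncomputable def Phi (x : ℝ) : ℝ := ∫ t in Set.Iic x, stdPdf t

section Helpers

open Filter

local notation "μG" => gaussianReal 0 1

lemma stdPdf_eq : stdPdf = gaussianPDFReal 0 1 := by
  funext x
  simp only [stdPdf, gaussianPDFReal]
  norm_num

instance : NullSingletonClass μG :=
  ⟨fun x => gaussianReal_absolutelyContinuous 0 one_ne_zero (measure_singleton x)⟩

lemma Phi_eq (x : ℝ) : Phi x = (μG (Iic x)).toReal := by
  rw [gaussianReal_apply_eq_integral 0 one_ne_zero,
    ENNReal.toReal_ofReal (integral_nonneg fun t => gaussianPDFReal_nonneg _ _ _)]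
  simp only [Phi, stdPdf_eq]

lemma Phi_mono : Monotone Phi := fun a b hab => by
  rw [Phi_eq, Phi_eq]
  exact ENNReal.toReal_mono (measure_ne_top _ _) (measure_mono (Iic_subset_Iic.2 hab))

lemma Phi_nonneg (x : ℝ) : 0 ≤ Phi x := by
  rw [Phi_eq]; exact ENNReal.toReal_nonneg

lemma Phi_le_one (x : ℝ) : Phi x ≤ 1 := by
  rw [Phi_eq]
  have := ENNReal.toReal_mono (by simp) (prob_le_one (μ := μG) (s := Iic x))
  simpa using this

lemma muG_Ioc {a b : ℝ} (h : a ≤ b) : (μG (Ioc a b)).toReal = Phi b - Phi a := by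
  have h1 : μG (Ioc a b) = μG (Iic b) - μG (Iic a) := by
    rw [← Iic_sdiff_Iic,
      measure_diff (Iic_subset_Iic.2 h) measurableSet_Iic.nullMeasurableSet (measure_ne_top _ _)]
  rw [h1, ENNReal.toReal_sub_of_le (measure_mono (Iic_subset_Iic.2 h)) (measure_ne_top _ _),
    Phi_eq, Phi_eq]

lemma muG_Ico {a b : ℝ} (h : a ≤ b) : (μG (Ico a b)).toReal = Phi b - Phi a := by
  rw [measure_congr Ico_ae_eq_Ioc]; exact muG_Ioc h

lemma muG_neg : Measure.map (fun x : ℝ => -x) μG = μG := by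
  have h := gaussianReal_map_const_mul (μ := 0) (v := 1) (-1)
  have h2 : (NNReal.mk ((-1 : ℝ) ^ 2) (sq_nonneg _)) * 1 = 1 := by
    ext; norm_num
  rw [h2] at h
  simpa [neg_one_mul] using h

lemma muG_refl (a b : ℝ) : μG (Ioc a b) = μG (Ico (-b) (-a)) := by
  conv_lhs => rw [← muG_neg]
  rw [Measure.map_apply measurable_neg measurableSet_Ioc]
  congr 1
  ext x
  simp only [mem_preimage, mem_Ioc, mem_Ico]
  constructor <;> intro h <;> constructor <;> linarith [h.1, h.2]

lemma Phi_zero : Phi 0 = 1 / 2 := by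
  have h1 : μG (Iic 0) = μG (Ici 0) := by
    conv_lhs => rw [← muG_neg]
    rw [Measure.map_apply measurable_neg measurableSet_Iic]
    congr 1
    ext x
    simp only [mem_preimage, mem_Iic, mem_Ici]
    constructor <;> intro h <;> linarith
  have h3 : μG (Ioi 0) = μG (Ici 0) := measure_congr Ioi_ae_eq_Ici
  have h2 : μG (Iic 0) + μG (Ioi 0) = 1 := by
    rw [← measure_union (Iic_disjoint_Ioi le_rfl) measurableSet_Ioi, Iic_union_Ioi,
      measure_univ]
  rw [h3, ← h1] at h2
  have h4 : (μG (Iic 0)).toReal + (μG (Iic 0)).toReal = 1 := by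
    rw [← ENNReal.toReal_add (measure_ne_top _ _) (measure_ne_top _ _), h2, ENNReal.toReal_one]
  rw [Phi_eq]
  linarith

lemma tendsto_Phi : Tendsto Phi atTop (nhds 1) := by
  have hPhi : Phi = fun x => (μG (Iic x)).toReal := funext Phi_eq
  rw [hPhi]
  have h := tendsto_measure_Iic_atTop (μ := μG)
  have h2 := (ENNReal.tendsto_toReal (measure_ne_top μG univ)).comp h
  simpa [measure_univ, Function.comp_def] using h2

lemma hasSum_p (w : ℝ) (hw : 0 < w) :
    HasSum (fun n : ℕ => Phi (((n : ℝ) + 1) * w) - Phi ((n : ℝ) * w)) (1 / 2) := by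
  have hpos : ∀ n : ℕ, 0 ≤ Phi (((n : ℝ) + 1) * w) - Phi ((n : ℝ) * w) := fun n =>
    sub_nonneg.2 (Phi_mono (by nlinarith))
  have htel : ∀ N : ℕ, ∑ i ∈ Finset.range N, (Phi (((i : ℝ) + 1) * w) - Phi ((i : ℝ) * w))
      = Phi ((N : ℝ) * w) - Phi 0 := by
    intro N
    have h := Finset.sum_range_sub (fun n : ℕ => Phi ((n : ℝ) * w)) N
    simp only [Nat.cast_add, Nat.cast_one, Nat.cast_zero, zero_mul] at h
    rw [← h]
  have hsum : Summable (fun n : ℕ => Phi (((n : ℝ) + 1) * w) - Phi ((n : ℝ) * w)) := by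
    apply summable_of_sum_range_le (c := 1) hpos
    intro n
    rw [htel]
    linarith [Phi_le_one ((n : ℝ) * w), Phi_nonneg (0 : ℝ)]
  have hlim : Tendsto (fun N : ℕ => ∑ i ∈ Finset.range N,
      (Phi (((i : ℝ) + 1) * w) - Phi ((i : ℝ) * w))) atTop (nhds (1 - Phi 0)) := by
    simp only [htel]
    exact (tendsto_Phi.comp ((tendsto_natCast_atTop_atTop).atTop_mul_const hw)).sub_const _
  have := hsum.hasSum.tendsto_sum_nat
  have heq : (∑' n : ℕ, (Phi (((n : ℝ) + 1) * w) - Phi ((n : ℝ) * w))) = 1 - Phi 0 :=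
    tendsto_nhds_unique this hlim
  have : (1 : ℝ) - Phi 0 = 1 / 2 := by rw [Phi_zero]; norm_num
  rw [this] at heq
  exact heq ▸ hsum.hasSum

lemma Phi_diff {a b : ℝ} (h : a ≤ b) : Phi b - Phi a = ∫ x in a..b, stdPdf x := by
  rw [intervalIntegral.integral_of_le h, ← muG_Ioc h,
    gaussianReal_apply_eq_integral 0 one_ne_zero,
    ENNReal.toReal_ofReal (integral_nonneg fun t => gaussianPDFReal_nonneg _ _ _)]
  simp only [stdPdf_eq]

lemma stdPdf_integrable : Integrable stdPdf := by
  rw [stdPdf_eq]; exact integrable_gaussianPDFReal 0 1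

lemma stdPdf_anti {x c : ℝ} (hx : 0 ≤ x) (hc : 0 ≤ c) : stdPdf (x + c) ≤ stdPdf x := by
  unfold stdPdf
  have h1 : (0 : ℝ) ≤ (Real.sqrt (2 * Real.pi))⁻¹ := by positivity
  apply mul_le_mul_of_nonneg_left _ h1
  apply Real.exp_le_exp.2
  nlinarith

lemma p_le_p0 (w : ℝ) (hw : 0 < w) (n : ℕ) :
    Phi (((n : ℝ) + 1) * w) - Phi ((n : ℝ) * w) ≤ Phi w - 1 / 2 := by
  have hnw : (0 : ℝ) ≤ (n : ℝ) * w := by positivity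
  have h1 : (n : ℝ) * w ≤ ((n : ℝ) + 1) * w := by nlinarith
  rw [Phi_diff h1, ← Phi_zero, Phi_diff hw.le]
  have htrans := intervalIntegral.integral_comp_add_right (a := (0 : ℝ)) (b := w)
    (fun x => stdPdf x) ((n : ℝ) * w)
  have harg : (0 : ℝ) + (n : ℝ) * w = (n : ℝ) * w := by ring
  have harg2 : w + (n : ℝ) * w = ((n : ℝ) + 1) * w := by ring
  rw [harg, harg2] at htrans
  rw [← htrans]
  apply intervalIntegral.integral_mono_on hw.le
  · exact (stdPdf_integrable.comp_add_right _).intervalIntegrable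
  · exact stdPdf_integrable.intervalIntegrable
  · intro x hx
    exact stdPdf_anti hx.1 hnw

lemma summable_p_sq (w : ℝ) (hw : 0 < w) :
    Summable (fun n : ℕ => (Phi (((n : ℝ) + 1) * w) - Phi ((n : ℝ) * w)) ^ 2) := by
  have hpos : ∀ n : ℕ, 0 ≤ Phi (((n : ℝ) + 1) * w) - Phi ((n : ℝ) * w) := fun n =>
    sub_nonneg.2 (Phi_mono (by nlinarith))
  refine Summable.of_nonneg_of_le (fun n => sq_nonneg _) (fun n => ?_)
    ((hasSum_p w hw).summable.mul_right (Phi w - 1 / 2))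
  have := p_le_p0 w hw n
  have := hpos n
  nlinarith

lemma sum_sq_le (w : ℝ) (hw : 0 < w) :
    2 * ∑' n : ℕ, (Phi (((n : ℝ) + 1) * w) - Phi ((n : ℝ) * w)) ^ 2 ≤ Phi w - 1 / 2 := by
  have hpos : ∀ n : ℕ, 0 ≤ Phi (((n : ℝ) + 1) * w) - Phi ((n : ℝ) * w) := fun n =>
    sub_nonneg.2 (Phi_mono (by nlinarith))
  have h1 : ∑' n : ℕ, (Phi (((n : ℝ) + 1) * w) - Phi ((n : ℝ) * w)) ^ 2
      ≤ ∑' n : ℕ, (Phi (((n : ℝ) + 1) * w) - Phi ((n : ℝ) * w)) * (Phi w - 1 / 2) := by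
    apply Summable.tsum_le_tsum _ (summable_p_sq w hw) ((hasSum_p w hw).summable.mul_right _)
    intro n
    have := p_le_p0 w hw n
    have := hpos n
    nlinarith
  have h2 : ∑' n : ℕ, (Phi (((n : ℝ) + 1) * w) - Phi ((n : ℝ) * w)) * (Phi w - 1 / 2)
      = (1 / 2) * (Phi w - 1 / 2) := by
    rw [tsum_mul_right, (hasSum_p w hw).tsum_eq]
  rw [h2] at h1
  linarith

lemma sq_le_sum (w : ℝ) (hw : 0 < w) :
    (Phi w - 1 / 2) ^ 2 ≤ ∑' n : ℕ, (Phi (((n : ℝ) + 1) * w) - Phi ((n : ℝ) * w)) ^ 2 := by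
  have h := Summable.le_tsum (summable_p_sq w hw) 0 (fun n _ => sq_nonneg _)
  simpa [Phi_zero] using h

/-- The quantization cells. -/
noncomputable def cellA (w : ℝ) (i : ℤ) : Set ℝ := Ico ((i : ℝ) * w) (((i : ℝ) + 1) * w)

lemma mem_cellA {w : ℝ} (hw : 0 < w) (i : ℤ) (x : ℝ) : x ∈ cellA w i ↔ ⌊x / w⌋ = i := by
  rw [cellA, mem_Ico, Int.floor_eq_iff, le_div_iff₀ hw, div_lt_iff₀ hw]

set_option maxHeartbeats 1000000 in
lemma part1 (w : ℝ) (hw : 0 < w) :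
    (((gaussianReal 0 1).prod (gaussianReal 0 1)) {p : ℝ × ℝ | ⌊p.1 / w⌋ = ⌊p.2 / w⌋}).toReal
      = 2 * ∑' i : ℕ, (Phi (((i : ℝ) + 1) * w) - Phi ((i : ℝ) * w)) ^ 2 := by
  have hmem := mem_cellA hw
  have hset : {p : ℝ × ℝ | ⌊p.1 / w⌋ = ⌊p.2 / w⌋} = ⋃ i : ℤ, cellA w i ×ˢ cellA w i := by
    ext ⟨x, y⟩
    simp only [mem_setOf_eq, mem_iUnion, mem_prod]
    constructor
    · intro h; exact ⟨⌊x / w⌋, (hmem _ _).2 rfl, (hmem _ _).2 h.symm⟩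
    · rintro ⟨i, hx, hy⟩; rw [(hmem _ _).1 hx, (hmem _ _).1 hy]
  have hdisj : Pairwise (Function.onFun Disjoint fun i : ℤ => cellA w i ×ˢ cellA w i) := by
    intro i j hij
    refine Set.disjoint_left.2 ?_
    rintro ⟨x, y⟩ hxy hxy'
    exact hij (((hmem i x).1 hxy.1).symm.trans ((hmem j x).1 hxy'.1))
  have hmeasA : ∀ i : ℤ, MeasurableSet (cellA w i ×ˢ cellA w i) := fun i =>
    measurableSet_Ico.prod measurableSet_Ico
  have key : (∑' i : ℤ, μG (cellA w i) * μG (cellA w i))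
      = ((gaussianReal 0 1).prod (gaussianReal 0 1)) (⋃ i : ℤ, cellA w i ×ˢ cellA w i) := by
    rw [measure_iUnion hdisj hmeasA]
    congr 1
    funext i
    rw [Measure.prod_prod]
  have hq : ∀ i : ℤ, (μG (cellA w i) * μG (cellA w i)).toReal
      = (μG (cellA w i)).toReal ^ 2 := fun i => by
    rw [ENNReal.toReal_mul, sq]
  have hsummable : Summable fun i : ℤ => (μG (cellA w i)).toReal ^ 2 := by
    have h1 : Summable fun i : ℤ => (μG (cellA w i) * μG (cellA w i)).toReal :=
      ENNReal.summable_toReal (by rw [key]; exact measure_ne_top _ _)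
    simpa only [hq] using h1
  rw [hset, ← key, ENNReal.tsum_toReal_eq
    (fun i => ENNReal.mul_ne_top (measure_ne_top _ _) (measure_ne_top _ _))]
  simp_rw [hq]
  have hs1 : Summable fun n : ℕ => (μG (cellA w (n : ℤ))).toReal ^ 2 :=
    hsummable.comp_injective (fun a b h => by exact_mod_cast h)
  have hs2 : Summable fun n : ℕ => (μG (cellA w (-((n : ℤ) + 1)))).toReal ^ 2 :=
    hsummable.comp_injective (fun a b h => by omega)
  rw [tsum_of_nat_of_neg_add_one (f := fun i : ℤ => (μG (cellA w i)).toReal ^ 2) hs1 hs2]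
  have hqval : ∀ n : ℕ, (μG (cellA w (n : ℤ))).toReal
      = Phi (((n : ℝ) + 1) * w) - Phi ((n : ℝ) * w) := by
    intro n
    have h3 : cellA w (n : ℤ) = Ico ((n : ℝ) * w) (((n : ℝ) + 1) * w) := by
      rw [cellA]; congr 1 <;> push_cast <;> ring
    rw [h3]
    exact muG_Ico (by nlinarith)
  have hrefl : ∀ n : ℕ, (μG (cellA w (-((n : ℤ) + 1)))).toReal
      = (μG (cellA w (n : ℤ))).toReal := by
    intro n
    have h1 : cellA w (-((n : ℤ) + 1)) = Ico (-(((n : ℝ) + 1) * w)) (-((n : ℝ) * w)) := by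
      rw [cellA]; congr 1 <;> push_cast <;> ring
    have h2 : μG (Ioc ((n : ℝ) * w) (((n : ℝ) + 1) * w))
        = μG (Ico (-(((n : ℝ) + 1) * w)) (-((n : ℝ) * w))) := muG_refl _ _
    have h3 : cellA w (n : ℤ) = Ico ((n : ℝ) * w) (((n : ℝ) + 1) * w) := by
      rw [cellA]; congr 1 <;> push_cast <;> ring
    rw [h1, ← h2, h3, measure_congr Ico_ae_eq_Ioc]
  simp only [hrefl, hqval]
  ring

end Helpers

/-- For independent standard normals, the collision probability of uniform quantization
is 2∑(Φ((i+1)w)-Φ(iw))², which is < 1/2 + (Φ(w)-1/2)² and tends to 1/2 as w → ∞. -/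
theorem stmt2 :
    (∀ w : ℝ, 0 < w →
      (((gaussianReal 0 1).prod (gaussianReal 0 1))
          {p : ℝ × ℝ | ⌊p.1 / w⌋ = ⌊p.2 / w⌋}).toReal
        = 2 * ∑' i : ℕ, (Phi (((i : ℝ) + 1) * w) - Phi ((i : ℝ) * w)) ^ 2) ∧
    (∀ w : ℝ, 0 < w →
      2 * ∑' i : ℕ, (Phi (((i : ℝ) + 1) * w) - Phi ((i : ℝ) * w)) ^ 2
        < 1 / 2 + (Phi w - 1 / 2) ^ 2) ∧
    Filter.Tendsto
      (fun w : ℝ => 2 * ∑' i : ℕ, (Phi (((i : ℝ) + 1) * w) - Phi ((i : ℝ) * w)) ^ 2)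
      Filter.atTop (nhds (1 / 2)) := by
  refine ⟨part1, fun w hw => ?_, ?_⟩
  · have h1 := sum_sq_le w hw
    nlinarith [sq_nonneg (Phi w - 1 / 2 - 1 / 2)]
  · apply tendsto_of_tendsto_of_tendsto_of_le_of_le'
      (g := fun w : ℝ => 2 * (Phi w - 1 / 2) ^ 2)
      (h := fun w : ℝ => Phi w - 1 / 2)
    · have : Filter.Tendsto (fun w : ℝ => 2 * (Phi w - 1 / 2) ^ 2) Filter.atTop
          (nhds (2 * ((1 : ℝ) - 1 / 2) ^ 2)) :=
        Filter.Tendsto.const_mul _ ((tendsto_Phi.sub_const _).pow 2)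
      convert this using 2
      norm_num
    · have : Filter.Tendsto (fun w : ℝ => Phi w - 1 / 2) Filter.atTop
          (nhds ((1 : ℝ) - 1 / 2)) := tendsto_Phi.sub_const _
      convert this using 2
      norm_num
    · filter_upwards [Filter.eventually_gt_atTop (0 : ℝ)] with w hw
      have := sq_le_sum w hw
      linarith
    · filter_upwards [Filter.eventually_gt_atTop (0 : ℝ)] with w hw
      exact sum_sq_le w hw
end

section
/- Fix d > 0. The function w ↦ P_{w,q}(w) = ∫_0^w (2/√d) φ(t/√d)(1 - t/w) dt is strictly increasing in w on (0, ∞). -/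
open MeasureTheory ProbabilityTheory Real Set

lemma stdPdf_pos (x : ℝ) : 0 < stdPdf x := by
  unfold stdPdf
  positivity

lemma stdPdf_cont : Continuous stdPdf := by
  unfold stdPdf
  continuity

/-- The random-offset collision probability is strictly increasing in the bin width w. -/
theorem stmt6 (d : ℝ) (hd : 0 < d) :
    StrictMonoOn
      (fun w : ℝ => ∫ t in Set.Ioc (0 : ℝ) w,
        (2 / Real.sqrt d) * stdPdf (t / Real.sqrt d) * (1 - t / w))
      (Set.Ioi (0 : ℝ)) := by
  intro w₁ hw₁ w₂ hw₂ hlt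
  simp only [mem_Ioi] at hw₁ hw₂
  have hsd : 0 < Real.sqrt d := Real.sqrt_pos.mpr hd
  set f : ℝ → ℝ → ℝ := fun w t => (2 / Real.sqrt d) * stdPdf (t / Real.sqrt d) * (1 - t / w)
    with hf
  have hcont : ∀ w : ℝ, Continuous (f w) := by
    intro w
    exact (continuous_const.mul (stdPdf_cont.comp (continuous_id.div_const _))).mul
      (continuous_const.sub (continuous_id.div_const _))
  have hint : ∀ w a b : ℝ, IntegrableOn (f w) (Ioc a b) := fun w a b =>
    (hcont w).integrableOn_Ioc
  have hcoef : ∀ t : ℝ, 0 ≤ (2 / Real.sqrt d) * stdPdf (t / Real.sqrt d) := fun t =>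
    mul_nonneg (by positivity) (stdPdf_pos _).le
  -- step 1
  have h1 : ∫ t in Ioc (0:ℝ) w₁, f w₁ t ≤ ∫ t in Ioc (0:ℝ) w₁, f w₂ t := by
    refine setIntegral_mono_on (hint w₁ 0 w₁) (hint w₂ 0 w₁) measurableSet_Ioc ?_
    intro t ht
    refine mul_le_mul_of_nonneg_left ?_ (hcoef t)
    have : t / w₂ ≤ t / w₁ := div_le_div_of_nonneg_left ht.1.le hw₁ hlt.le
    linarith
  -- step 2: split
  have hsplit : ∫ t in Ioc (0:ℝ) w₂, f w₂ t
      = (∫ t in Ioc (0:ℝ) w₁, f w₂ t) + ∫ t in Ioc w₁ w₂, f w₂ t := by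
    rw [← setIntegral_union (Set.Ioc_disjoint_Ioc_of_le le_rfl) measurableSet_Ioc
      (hint w₂ 0 w₁) (hint w₂ w₁ w₂), Set.Ioc_union_Ioc_eq_Ioc hw₁.le hlt.le]
  -- step 3: positivity of the tail
  have h2 : 0 < ∫ t in Ioc w₁ w₂, f w₂ t := by
    have hnn : 0 ≤ᵐ[volume.restrict (Ioc w₁ w₂)] f w₂ := by
      refine (ae_restrict_iff' measurableSet_Ioc).mpr (ae_of_all _ ?_)
      intro t ht
      have : t / w₂ ≤ 1 := (div_le_one hw₂).mpr ht.2
      exact mul_nonneg (hcoef t) (by linarith)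
    rw [setIntegral_pos_iff_support_of_nonneg_ae hnn (hint w₂ w₁ w₂)]
    have hsub : Ioo w₁ w₂ ⊆ Function.support (f w₂) ∩ Ioc w₁ w₂ := by
      intro t ht
      refine ⟨?_, ht.1, ht.2.le⟩
      have h1' : t / w₂ < 1 := (div_lt_one hw₂).mpr ht.2
      have : 0 < f w₂ t :=
        mul_pos (mul_pos (by positivity) (stdPdf_pos _)) (by linarith)
      exact this.ne'
    calc (0:ENNReal) < volume (Ioo w₁ w₂) := by
          rw [Real.volume_Ioo]; simp [hlt, sub_pos.mpr hlt]
      _ ≤ _ := measure_mono hsub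
  show (∫ t in Ioc (0:ℝ) w₁, f w₁ t) < ∫ t in Ioc (0:ℝ) w₂, f w₂ t
  calc ∫ t in Ioc (0:ℝ) w₁, f w₁ t ≤ ∫ t in Ioc (0:ℝ) w₁, f w₂ t := h1
    _ < ∫ t in Ioc (0:ℝ) w₂, f w₂ t := by rw [hsplit]; linarith
end
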